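/- Let s ∈ ℤ_{>0}. Let (Tᵢ)_{i∈ℕ} be a sequence of subsets of ℝ^s with T_{i+1} ⊆ Tᵢ for all i, such that each Tᵢ is the convex hull of a finite subset of ℝ^s and has nonempty interior. Let T be a nonempty closed convex subset of ⋂_{i∈ℕ} Tᵢ with empty interior. Then there exist a point α ∈ T and a vector e ∈ ℝ^s such that for every i there exists λ ≥ 0 with α + λ·e ∈ Tᵢ and α + λ·e ∉ T. -/

import Mathlib

open Filter Topology

section Aux

variable {E : Type*} [NormedAddCommGroup E] [NormedSpace ℝ E]

/-- Conic Carathéodory: a nonnegative combination supported on `t` equals one supported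
on a subset of indices with linearly independent vectors. -/
private lemma conic_carath {ι : Type*} [Fintype ι] [DecidableEq ι] (g : ι → E) :
    ∀ (t : Finset ι) (μ : ι → ℝ), (∀ i, 0 ≤ μ i) → (∀ i ∉ t, μ i = 0) →
    ∃ (t' : Finset ι) (ν : ι → ℝ), LinearIndependent ℝ (fun i : {x // x ∈ t'} => g i) ∧
      (∀ i, 0 ≤ ν i) ∧ (∀ i ∉ t', ν i = 0) ∧ ∑ i, ν i • g i = ∑ i, μ i • g i := by
  intro t
  induction t using Finset.strongInduction with
  | _ t ih =>
    intro μ hμ hsupp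
    by_cases hLI : LinearIndependent ℝ (fun i : {x // x ∈ t} => g i)
    · exact ⟨t, μ, hLI, hμ, hsupp, rfl⟩
    · obtain ⟨c₀, hc₀sum, j₀, hj₀⟩ := Fintype.not_linearIndependent_iff.mp hLI
      obtain ⟨c, hcsum, j, hjpos⟩ :
          ∃ c : {x // x ∈ t} → ℝ, (∑ i, c i • g ↑i = 0) ∧ ∃ i, 0 < c i := by
        rcases hj₀.lt_or_gt with h | h
        · refine ⟨-c₀, ?_, j₀, by simpa using h⟩
          simp only [Pi.neg_apply, neg_smul, Finset.sum_neg_distrib, hc₀sum, neg_zero]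
        · exact ⟨c₀, hc₀sum, j₀, h⟩
      set ce : ι → ℝ := fun i => if h : i ∈ t then c ⟨i, h⟩ else 0 with hce
      have hcesum : ∑ i, ce i • g i = 0 := by
        rw [← Finset.sum_subset (Finset.subset_univ t)
          (fun i _ hi => by simp [hce, dif_neg hi])]
        rw [← Finset.sum_attach t (fun i => ce i • g i), ← hcsum,
          ← Finset.univ_eq_attach]
        exact Finset.sum_congr rfl fun i _ => by simp [hce, i.2]
      set P : Finset ι := t.filter (fun i => 0 < ce i) with hP
      have hPne : P.Nonempty := by
        refine ⟨↑j, Finset.mem_filter.mpr ⟨j.2, ?_⟩⟩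
        simpa [hce, dif_pos j.2] using hjpos
      obtain ⟨i₀, hi₀P, hmin⟩ := P.exists_min_image (fun i => μ i / ce i) hPne
      have hi₀t : i₀ ∈ t := (Finset.mem_filter.mp hi₀P).1
      have hci₀ : 0 < ce i₀ := (Finset.mem_filter.mp hi₀P).2
      set r : ℝ := μ i₀ / ce i₀ with hr
      have hr0 : 0 ≤ r := div_nonneg (hμ _) hci₀.le
      set μ' : ι → ℝ := fun i => μ i - r * ce i with hμ'
      have hμ'0 : ∀ i, 0 ≤ μ' i := by
        intro i
        by_cases hiP : i ∈ P
        · have hci : 0 < ce i := (Finset.mem_filter.mp hiP).2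
          have h1 : r ≤ μ i / ce i := hmin i hiP
          have h2 : r * ce i ≤ μ i := (le_div_iff₀ hci).mp h1
          simp only [hμ']; linarith
        · by_cases hit : i ∈ t
          · have hci : ce i ≤ 0 := by
              by_contra h
              exact hiP (Finset.mem_filter.mpr ⟨hit, lt_of_not_ge h⟩)
            have : r * ce i ≤ 0 := mul_nonpos_iff.mpr (Or.inl ⟨hr0, hci⟩)
            have := hμ i
            simp only [hμ']; linarith
          · simp [hμ', hsupp i hit, hce, dif_neg hit]
      have hμ'supp : ∀ i ∉ t.erase i₀, μ' i = 0 := by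
        intro i hi
        rw [Finset.mem_erase] at hi
        push_neg at hi
        by_cases hit : i ∈ t
        · have : i = i₀ := by by_contra hne; exact hi hne hit
          subst this
          simp only [hμ', hr]
          field_simp
          ring
        · simp [hμ', hsupp i hit, hce, dif_neg hit]
      have hsum' : ∑ i, μ' i • g i = ∑ i, μ i • g i := by
        simp only [hμ', sub_smul, Finset.sum_sub_distrib]
        have : ∑ i, (r * ce i) • g i = 0 := by
          simp only [mul_smul, ← Finset.smul_sum, hcesum, smul_zero]
        rw [this, sub_zero]
      obtain ⟨t', ν, hLI', h0', hsup', hsum''⟩ :=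
        ih (t.erase i₀) (Finset.erase_ssubset hi₀t) μ' hμ'0 hμ'supp
      exact ⟨t', ν, hLI', h0', hsup', hsum''.trans hsum'⟩

private lemma isClosed_coneGen {ι : Type*} [Fintype ι] [DecidableEq ι]
    [FiniteDimensional ℝ E] (g : ι → E) :
    IsClosed {x : E | ∃ μ : ι → ℝ, (∀ i, 0 ≤ μ i) ∧ x = ∑ i, μ i • g i} := by
  have key : {x : E | ∃ μ : ι → ℝ, (∀ i, 0 ≤ μ i) ∧ x = ∑ i, μ i • g i} =
      ⋃ t ∈ {t : Finset ι | LinearIndependent ℝ (fun i : {x // x ∈ t} => g i)},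
        {x : E | ∃ ν : ι → ℝ, (∀ i, 0 ≤ ν i) ∧ (∀ i ∉ t, ν i = 0) ∧
          x = ∑ i, ν i • g i} := by
    ext x
    simp only [Set.mem_setOf_eq, Set.mem_iUnion]
    constructor
    · rintro ⟨μ, hμ, rfl⟩
      obtain ⟨t', ν, hLI, h0, hsup, hsum⟩ :=
        conic_carath g Finset.univ μ hμ (by simp)
      exact ⟨t', hLI, ν, h0, hsup, hsum.symm⟩
    · rintro ⟨t, ht, ν, h0, hsup, rfl⟩
      exact ⟨ν, h0, rfl⟩
  rw [key]
  refine Set.Finite.isClosed_biUnion (Set.toFinite _) ?_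
  intro t ht
  let f : ({x // x ∈ t} → ℝ) →ₗ[ℝ] E :=
    { toFun := fun ν => ∑ i, ν i • g ↑i
      map_add' := fun a b => by
        simp [add_smul, Finset.sum_add_distrib]
      map_smul' := fun c a => by
        simp [smul_smul, Finset.smul_sum] }
  have hfval : ∀ ν : {x // x ∈ t} → ℝ, f ν = ∑ i, ν i • g ↑i := fun _ => rfl
  have hker : LinearMap.ker f = ⊥ := by
    rw [LinearMap.ker_eq_bot']
    intro ν hν
    have := Fintype.linearIndependent_iff.mp ht ν hν
    funext i
    exact this i
  have hext : ∀ ν : ι → ℝ, (∀ i ∉ t, ν i = 0) →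
      ∑ i, ν i • g i = f (fun i => ν ↑i) := by
    intro ν hsup
    rw [hfval, Finset.univ_eq_attach, Finset.sum_attach t (fun i => ν i • g i)]
    exact (Finset.sum_subset (Finset.subset_univ t)
      (fun i _ hi => by simp [hsup i hi])).symm
  have himg : {x : E | ∃ ν : ι → ℝ, (∀ i, 0 ≤ ν i) ∧ (∀ i ∉ t, ν i = 0) ∧
      x = ∑ i, ν i • g i} = f '' {ν | ∀ i, 0 ≤ ν i} := by
    ext x
    constructor
    · rintro ⟨ν, h0, hsup, rfl⟩
      exact ⟨fun i => ν ↑i, fun i => h0 _, (hext ν hsup).symm⟩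
    · rintro ⟨ν, h0, rfl⟩
      classical
      refine ⟨fun i => if h : i ∈ t then ν ⟨i, h⟩ else 0, fun i => ?_,
        fun i hi => dif_neg hi, ?_⟩
      · by_cases h : i ∈ t
        · simpa [dif_pos h] using h0 ⟨i, h⟩
        · simp [dif_neg h]
      · rw [hext _ (fun i hi => dif_neg hi)]
        congr 1
        funext i
        simp [dif_pos i.2]
  rw [himg]
  have hclosed : IsClosed {ν : {x // x ∈ t} → ℝ | ∀ i, 0 ≤ ν i} := by
    have : {ν : {x // x ∈ t} → ℝ | ∀ i, 0 ≤ ν i} = ⋂ i, {ν | 0 ≤ ν i} := by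
      ext ν; simp [Set.mem_iInter]
    rw [this]
    exact isClosed_iInter fun i => isClosed_le continuous_const (continuous_apply i)
  exact (LinearMap.isClosedEmbedding_of_injective hker).isClosedMap _ hclosed

private lemma relint_reach {S : Set E} {α : E} (hα : α ∈ intrinsicInterior ℝ S)
    {v : E} (hv : v ∈ (affineSpan ℝ S).direction) :
    ∃ ε : ℝ, 0 < ε ∧ α + ε • v ∈ S := by
  obtain ⟨x, hx, hxα⟩ := hα
  have hαspan : α ∈ affineSpan ℝ S := hxα ▸ x.2
  have hmem : ∀ ε : ℝ, α + ε • v ∈ affineSpan ℝ S := by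
    intro ε
    have := AffineSubspace.vadd_mem_of_mem_direction
      (Submodule.smul_mem _ ε hv) hαspan
    simpa [vadd_eq_add, add_comm] using this
  set c : ℝ → (affineSpan ℝ S : AffineSubspace ℝ E) := fun ε => ⟨α + ε • v, hmem ε⟩ with hc
  have hcont : Continuous c :=
    Continuous.subtype_mk (continuous_const.add (continuous_id.smul continuous_const)) _
  have hc0 : c 0 = x := Subtype.ext (by simp [hc, hxα])
  have hnhds : (Subtype.val ⁻¹' S : Set (affineSpan ℝ S)) ∈ 𝓝 x :=
    mem_interior_iff_mem_nhds.mp hx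
  have hev : ∀ᶠ ε in 𝓝 (0 : ℝ), c ε ∈ (Subtype.val ⁻¹' S : Set (affineSpan ℝ S)) :=
    hcont.continuousAt.preimage_mem_nhds (by rw [hc0]; exact hnhds)
  obtain ⟨δ, hδ, hball⟩ := Metric.eventually_nhds_iff.mp hev
  refine ⟨δ / 2, by positivity, ?_⟩
  have : c (δ / 2) ∈ (Subtype.val ⁻¹' S : Set (affineSpan ℝ S)) := by
    apply hball
    rw [Real.dist_eq]
    rw [sub_zero, abs_of_pos (by positivity)]
    linarith
  exact this

end Aux

theorem common_ray (s : ℕ) (hs : 0 < s) (T : ℕ → Set (Fin s → ℝ))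
    (hdec : ∀ i, T (i + 1) ⊆ T i)
    (hpoly : ∀ i, ∃ V : Finset (Fin s → ℝ), T i = convexHull ℝ (V : Set (Fin s → ℝ)))
    (hfull : ∀ i, (interior (T i)).Nonempty)
    (S : Set (Fin s → ℝ)) (hSne : S.Nonempty) (hScl : IsClosed S) (hScv : Convex ℝ S)
    (hSsub : S ⊆ ⋂ i, T i) (hSint : interior S = ∅) :
    ∃ α ∈ S, ∃ e : Fin s → ℝ,
      ∀ i, ∃ l : ℝ, 0 ≤ l ∧ α + l • e ∈ T i ∧ α + l • e ∉ S := by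
  classical
  -- basic setup
  have hST : ∀ i, S ⊆ T i := fun i y hy => Set.mem_iInter.mp (hSsub hy) i
  have hSpan_ne : affineSpan ℝ S ≠ ⊤ := by
    intro h
    have := (hScv.interior_nonempty_iff_affineSpan_eq_top).mpr h
    rw [hSint] at this
    exact Set.not_nonempty_empty this
  set L : Submodule ℝ (Fin s → ℝ) := (affineSpan ℝ S).direction with hL
  obtain ⟨M, hLM⟩ := Submodule.exists_isCompl L
  obtain ⟨α, hαint⟩ := Set.Nonempty.intrinsicInterior hScv hSne
  have hαS : α ∈ S := intrinsicInterior_subset hαint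
  have hαspan : α ∈ affineSpan ℝ S := mem_affineSpan ℝ hαS
  choose V hV using hpoly
  -- the cones
  set C : ℕ → Set (Fin s → ℝ) := fun i =>
    {y | ∃ μ : {v // v ∈ V i} → ℝ, (∀ v, 0 ≤ μ v) ∧
      y = ∑ v, μ v • ((v : Fin s → ℝ) - α)} with hC
  have hC_closed : ∀ i, IsClosed (C i) := fun i =>
    isClosed_coneGen (fun v : {v // v ∈ V i} => (v : Fin s → ℝ) - α)
  have hC_sub : ∀ i, ∀ y ∈ T i, y - α ∈ C i := by
    intro i y hy
    rw [hV i, Finset.convexHull_eq] at hy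
    obtain ⟨w, hw0, hw1, hwx⟩ := hy
    rw [Finset.centerMass_eq_of_sum_1 _ _ hw1] at hwx
    simp only [id_eq] at hwx
    refine ⟨fun v => w ↑v, fun v => hw0 _ v.2, ?_⟩
    rw [Finset.univ_eq_attach]
    simp only [smul_sub]
    rw [Finset.sum_sub_distrib, ← Finset.sum_smul,
      Finset.sum_attach (V i) (fun y => w y • y), Finset.sum_attach (V i) w,
      hw1, one_smul, hwx]
  have hC_smul : ∀ i (c : ℝ) (y : Fin s → ℝ), 0 ≤ c → y ∈ C i → c • y ∈ C i := by
    rintro i c y hc ⟨μ, h0, rfl⟩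
    refine ⟨fun v => c * μ v, fun v => mul_nonneg hc (h0 v), ?_⟩
    rw [Finset.smul_sum]
    simp only [smul_smul]
  have hC_add : ∀ i (y z : Fin s → ℝ), y ∈ C i → z ∈ C i → y + z ∈ C i := by
    rintro i y z ⟨μ, hμ0, rfl⟩ ⟨ν, hν0, rfl⟩
    refine ⟨fun v => μ v + ν v, fun v => add_nonneg (hμ0 v) (hν0 v), ?_⟩
    simp only [add_smul, Finset.sum_add_distrib]
  have hC_L : ∀ i, ∀ v ∈ L, v ∈ C i := by
    intro i v hv
    obtain ⟨ε, hε, hεS⟩ := relint_reach hαint hv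
    have h1 : (α + ε • v) - α ∈ C i := hC_sub i _ (hST i hεS)
    have h2 : ε • v ∈ C i := by
      rwa [add_sub_cancel_left] at h1
    have h3 := hC_smul i ε⁻¹ _ (inv_nonneg.mpr hε.le) h2
    rwa [smul_smul, inv_mul_cancel₀ hε.ne', one_smul] at h3
  -- monotonicity
  have hmono : ∀ i j, i ≤ j → T j ⊆ T i := by
    intro i j hij
    induction hij with
    | refl => exact subset_rfl
    | step h ih => exact fun y hy => ih (hdec _ hy)
  -- points outside the affine span
  have hx : ∀ i, ∃ y ∈ T i, y ∉ affineSpan ℝ S := by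
    intro i
    by_contra h
    push_neg at h
    have hconv : Convex ℝ (T i) := by rw [hV i]; exact convex_convexHull ℝ _
    have htop : affineSpan ℝ (T i) = ⊤ :=
      hconv.interior_nonempty_iff_affineSpan_eq_top.mp (hfull i)
    have hle : affineSpan ℝ (T i) ≤ affineSpan ℝ S := affineSpan_le.mpr h
    rw [htop] at hle
    exact hSpan_ne (top_le_iff.mp hle)
  choose x hxT hxA using hx
  -- projections
  set πL := L.projectionOnto M hLM with hπL
  set πM := M.projectionOnto L hLM.symm with hπM
  have hproj : ∀ y : Fin s → ℝ, (πL y : Fin s → ℝ) + (πM y : Fin s → ℝ) = y :=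
    fun y => Submodule.projection_add_projection_eq_self hLM y
  have hn0 : ∀ i, (πM (x i - α) : Fin s → ℝ) ≠ 0 := by
    intro i h
    apply hxA i
    have hwL : x i - α ∈ L := by
      have h2 := hproj (x i - α)
      rw [h, add_zero] at h2
      exact h2 ▸ (πL (x i - α)).2
    have := AffineSubspace.vadd_mem_of_mem_direction hwL hαspan
    simpa [vadd_eq_add, sub_add_cancel] using this
  set ν : ℕ → (Fin s → ℝ) := fun i =>
    ‖(πM (x i - α) : Fin s → ℝ)‖⁻¹ • (πM (x i - α) : Fin s → ℝ) with hν
  have hν_sphere : ∀ i, ν i ∈ Metric.sphere (0 : Fin s → ℝ) 1 := by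
    intro i
    rw [mem_sphere_zero_iff_norm, hν]
    rw [norm_smul, norm_inv, norm_norm, inv_mul_cancel₀ (norm_ne_zero_iff.mpr (hn0 i))]
  have hν_M : ∀ i, ν i ∈ M := fun i => M.smul_mem _ (πM (x i - α)).2
  have hν_C : ∀ i j, i ≤ j → ν j ∈ C i := by
    intro i j hij
    have hw : x j - α ∈ C i := hC_sub i _ (hmono i j hij (hxT j))
    have hl : -(πL (x j - α) : Fin s → ℝ) ∈ C i :=
      hC_L i _ (Submodule.neg_mem _ (πL (x j - α)).2)
    have hsum := hC_add i _ _ hw hl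
    have heq : (x j - α) + -(πL (x j - α) : Fin s → ℝ) = (πM (x j - α) : Fin s → ℝ) := by
      linear_combination -hproj (x j - α)
    rw [heq] at hsum
    exact hC_smul i _ _ (inv_nonneg.mpr (norm_nonneg _)) hsum
  -- compactness of the sphere
  obtain ⟨e, heS, φ, hφ, htend⟩ :=
    (isCompact_sphere (0 : Fin s → ℝ) 1).tendsto_subseq hν_sphere
  have he1 : ‖e‖ = 1 := mem_sphere_zero_iff_norm.mp heS
  have heC : ∀ i, e ∈ C i := by
    intro i
    refine (hC_closed i).mem_of_tendsto htend ?_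
    filter_upwards [Filter.eventually_ge_atTop i] with k hk
    exact hν_C i (φ k) (le_trans hk hφ.le_apply)
  have heM : e ∈ M := by
    have hMc : IsClosed (M : Set (Fin s → ℝ)) := Submodule.closed_of_finiteDimensional M
    exact hMc.mem_of_tendsto htend (Filter.Eventually.of_forall fun k => hν_M _)
  -- conclusion
  refine ⟨α, hαS, e, fun i => ?_⟩
  obtain ⟨μ, hμ0, hμe⟩ := heC i
  set m : ℝ := ∑ v, μ v with hm
  have hm0 : 0 ≤ m := Finset.sum_nonneg fun v _ => hμ0 v
  have hmne : m ≠ 0 := by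
    intro h
    have hall : ∀ v ∈ (Finset.univ : Finset {v // v ∈ V i}), μ v = 0 :=
      (Finset.sum_eq_zero_iff_of_nonneg (fun v _ => hμ0 v)).mp h
    have : e = 0 := by
      rw [hμe]
      exact Finset.sum_eq_zero fun v hv => by rw [hall v hv, zero_smul]
    rw [this, norm_zero] at he1
    norm_num at he1
  have hsum1 : ∑ v ∈ (V i).attach, (m⁻¹ * μ v) = 1 := by
    rw [← Finset.univ_eq_attach, ← Finset.mul_sum, ← hm, inv_mul_cancel₀ hmne]
  have key : α + m⁻¹ • e = ∑ v : {v // v ∈ V i}, (m⁻¹ * μ v) • (v : Fin s → ℝ) := by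
    rw [hμe, Finset.smul_sum]
    simp only [smul_smul, smul_sub]
    rw [Finset.sum_sub_distrib, ← Finset.sum_smul]
    have : ∑ v : {v // v ∈ V i}, m⁻¹ * μ v = 1 := by
      rw [Finset.univ_eq_attach]; exact hsum1
    rw [this, one_smul]
    abel
  refine ⟨m⁻¹, inv_nonneg.mpr hm0, ?_, ?_⟩
  · rw [hV i, key, Finset.univ_eq_attach]
    have hcm := Finset.centerMass_mem_convexHull (V i).attach
      (w := fun v => m⁻¹ * μ v)
      (fun v _ => mul_nonneg (inv_nonneg.mpr hm0) (hμ0 v))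
      (by rw [hsum1]; norm_num)
      (z := fun v => (v : Fin s → ℝ))
      (fun v _ => Finset.mem_coe.mpr v.2)
    rwa [Finset.centerMass_eq_of_sum_1 _ _ hsum1] at hcm
  · intro hmem
    have h1 : (α + m⁻¹ • e) -ᵥ α ∈ (affineSpan ℝ S).direction :=
      AffineSubspace.vsub_mem_direction (mem_affineSpan ℝ hmem) hαspan
    have h2 : m⁻¹ • e ∈ L := by
      simpa [vsub_eq_sub, add_sub_cancel_left] using h1
    have h3 : e ∈ L := by
      have := L.smul_mem m h2
      rwa [smul_smul, mul_inv_cancel₀ hmne, one_smul] at this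
    have : e = 0 := Submodule.disjoint_def.mp hLM.disjoint e h3 heM
    rw [this, norm_zero] at he1
    norm_num at he1
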